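/- Let W be a real m×m matrix and A a real n×n matrix such that the spectral (operator 2-) norm satisfies ‖Aᵀ ⊗ W‖₂ < 1. Then for every componentwise non-expansive φ : ℝ → ℝ and every real m×n matrix B, the map X ↦ φ(W X A + B) is a contraction of ℝ^{m×n} with respect to the Frobenius norm (with Lipschitz constant ‖Aᵀ ⊗ W‖₂ < 1), and the equation X = φ(W X A + B) has exactly one solution. -/

import Mathlib

open Matrix Kronecker

/-- The spectral (operator 2-) norm of a real square matrix: the operator norm of the
associated linear map on Euclidean space. -/
noncomputable def l2OpNorm {ι : Type*} [Fintype ι] [DecidableEq ι]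
    (M : Matrix ι ι ℝ) : ℝ :=
  ‖Matrix.toEuclideanCLM (𝕜 := ℝ) M‖

/-- The Frobenius norm of a real matrix: the square root of the sum of the squares of
its entries. -/
noncomputable def frobNorm {ι κ : Type*} [Fintype ι] [Fintype κ]
    (X : Matrix ι κ ℝ) : ℝ :=
  Real.sqrt (∑ i, ∑ j, X i j ^ 2)

theorem stmt_7 {m n : ℕ} (W : Matrix (Fin m) (Fin m) ℝ) (A : Matrix (Fin n) (Fin n) ℝ)
    (hnorm : l2OpNorm (Aᵀ ⊗ₖ W) < 1)
    (φ : ℝ → ℝ) (hφ : ∀ a b : ℝ, |φ a - φ b| ≤ |a - b|)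
    (B : Matrix (Fin m) (Fin n) ℝ) :
    (∀ X Y : Matrix (Fin m) (Fin n) ℝ,
      frobNorm ((W * X * A + B).map φ - (W * Y * A + B).map φ) ≤
        l2OpNorm (Aᵀ ⊗ₖ W) * frobNorm (X - Y)) ∧
    ∃! X : Matrix (Fin m) (Fin n) ℝ, X = (W * X * A + B).map φ := by
  classical
  set M : Matrix (Fin n × Fin m) (Fin n × Fin m) ℝ := Aᵀ ⊗ₖ W with hM
  set T := Matrix.toEuclideanCLM (𝕜 := ℝ) M with hT
  -- vectorization
  set vec : Matrix (Fin m) (Fin n) ℝ → EuclideanSpace ℝ (Fin n × Fin m) :=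
    fun X => (WithLp.equiv 2 _).symm (fun p => X p.2 p.1) with hvec
  set unvec : EuclideanSpace ℝ (Fin n × Fin m) → Matrix (Fin m) (Fin n) ℝ :=
    fun v => Matrix.of (fun i j => v (j, i)) with hunvec
  have hvu : ∀ v, vec (unvec v) = v := fun v => rfl
  have huv : ∀ X, unvec (vec X) = X := fun X => rfl
  have hvec_sub : ∀ P Q : Matrix (Fin m) (Fin n) ℝ, vec (P - Q) = vec P - vec Q :=
    fun _ _ => rfl
  have hvecnorm : ∀ X : Matrix (Fin m) (Fin n) ℝ, ‖vec X‖ = frobNorm X := by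
    intro X
    rw [EuclideanSpace.norm_eq, frobNorm]
    congr 1
    rw [Fintype.sum_prod_type, Finset.sum_comm]
    simp [hvec, sq_abs]
  have hvecA : ∀ Z : Matrix (Fin m) (Fin n) ℝ, vec (W * Z * A) = T (vec Z) := by
    intro Z
    show (WithLp.equiv 2 _).symm (fun p => (W * Z * A) p.2 p.1) =
      Matrix.toEuclideanCLM (𝕜 := ℝ) M ((WithLp.equiv 2 _).symm (fun p => Z p.2 p.1))
    change _ = (WithLp.equiv 2 _).symm (M *ᵥ fun p => Z p.2 p.1)
    congr 1
    funext p
    obtain ⟨j, i⟩ := p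
    simp only [Matrix.toLin'_apply, Matrix.mulVec, dotProduct, Matrix.mul_apply,
      Fintype.sum_prod_type, hM, Matrix.kroneckerMap_apply, Matrix.transpose_apply,
      Finset.sum_mul]
    refine Finset.sum_congr rfl fun k _ => Finset.sum_congr rfl fun l _ => by ring
  -- the key Lipschitz estimate
  have hWZA : ∀ Z : Matrix (Fin m) (Fin n) ℝ,
      frobNorm (W * Z * A) ≤ l2OpNorm M * frobNorm Z := by
    intro Z
    rw [← hvecnorm, ← hvecnorm, hvecA]
    exact T.le_opNorm (vec Z)
  have hmap : ∀ P Q : Matrix (Fin m) (Fin n) ℝ,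
      frobNorm (P.map φ - Q.map φ) ≤ frobNorm (P - Q) := by
    intro P Q
    apply Real.sqrt_le_sqrt
    refine Finset.sum_le_sum fun i _ => Finset.sum_le_sum fun j _ => ?_
    simp only [Matrix.sub_apply, Matrix.map_apply]
    rw [← sq_abs (φ (P i j) - φ (Q i j)), ← sq_abs (P i j - Q i j)]
    exact pow_le_pow_left₀ (abs_nonneg _) (hφ _ _) 2
  have key : ∀ X Y : Matrix (Fin m) (Fin n) ℝ,
      frobNorm ((W * X * A + B).map φ - (W * Y * A + B).map φ) ≤
        l2OpNorm M * frobNorm (X - Y) := by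
    intro X Y
    refine (hmap _ _).trans ?_
    have : (W * X * A + B) - (W * Y * A + B) = W * (X - Y) * A := by
      rw [Matrix.mul_sub, Matrix.sub_mul]; abel
    rw [this]
    exact hWZA _
  refine ⟨key, ?_⟩
  -- Banach fixed point
  set f : Matrix (Fin m) (Fin n) ℝ → Matrix (Fin m) (Fin n) ℝ :=
    fun X => (W * X * A + B).map φ with hf
  set g : EuclideanSpace ℝ (Fin n × Fin m) → EuclideanSpace ℝ (Fin n × Fin m) :=
    fun v => vec (f (unvec v)) with hg
  have hK0 : (0 : ℝ) ≤ l2OpNorm M := norm_nonneg _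
  set K : NNReal := ⟨l2OpNorm M, hK0⟩ with hK
  have hcontr : ContractingWith K g := by
    constructor
    · exact_mod_cast hnorm
    · refine LipschitzWith.of_dist_le_mul fun v w => ?_
      rw [dist_eq_norm, dist_eq_norm, hg]
      have h1 : vec (f (unvec v)) - vec (f (unvec w)) = vec (f (unvec v) - f (unvec w)) :=
        (hvec_sub _ _).symm
      have h2 : v - w = vec (unvec v - unvec w) := by
        rw [hvec_sub, hvu, hvu]
      rw [h1, h2, hvecnorm, hvecnorm]
      exact key (unvec v) (unvec w)
  have hne : Nonempty (EuclideanSpace ℝ (Fin n × Fin m)) := ⟨0⟩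
  set v₀ := hcontr.fixedPoint g with hv0
  have hfix : Function.IsFixedPt g v₀ := hcontr.fixedPoint_isFixedPt
  refine ⟨unvec v₀, ?_, ?_⟩
  · have : g v₀ = v₀ := hfix
    calc unvec v₀ = unvec (g v₀) := by rw [this]
    _ = f (unvec v₀) := by rw [hg]; exact huv _
  · intro X hX
    have hgfix : Function.IsFixedPt g (vec X) := by
      show vec (f (unvec (vec X))) = vec X
      rw [huv]
      exact congrArg vec hX.symm
    have : vec X = v₀ := hcontr.fixedPoint_unique hgfix
    calc X = unvec (vec X) := (huv X).symm
    _ = unvec v₀ := by rw [this]
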